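/- Let p > 2. For every ε > 0 there exists a constant C > 0 such that, defining f(x,y) = (|x−y|^p + C(|1+x|^p + |1−x|^p + |1+y|^p + |1−y|^p)) / (2 + |x|^p + |y|^p) for x, y ∈ ℝ, the following holds: if the pair (x,y) is good — i.e., both |x| and |y| lie in the open interval (1−ε, 1+ε) and xy < 0 — then f(x,y) ≤ C·2^{p-1} + (1+ε)·2^p/(2 + |x|^p + |y|^p); otherwise f(x,y) ≤ C·2^{p-1}. -/

import Mathlib

private lemma rsuper {q a b : ℝ} (hq : 1 ≤ q) (ha : 0 ≤ a) (hb : 0 ≤ b) :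
    a ^ q + b ^ q ≤ (a + b) ^ q := by
  have := NNReal.add_rpow_le_rpow_add (⟨a, ha⟩ : NNReal) ⟨b, hb⟩ hq
  exact_mod_cast this

private lemma rclark {q a b : ℝ} (hq : 1 ≤ q) (ha : 0 ≤ a) (hb : 0 ≤ b) :
    (a + b) ^ q ≤ 2 ^ (q - 1) * (a ^ q + b ^ q) := by
  have := NNReal.rpow_add_le_mul_rpow_add_rpow (⟨a, ha⟩ : NNReal) ⟨b, hb⟩ hq
  exact_mod_cast this

private lemma rwt {q w₁ w₂ z₁ z₂ : ℝ} (hq : 1 ≤ q) (hw₁ : 0 ≤ w₁) (hw₂ : 0 ≤ w₂)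
    (hw : w₁ + w₂ = 1) (hz₁ : 0 ≤ z₁) (hz₂ : 0 ≤ z₂) :
    (w₁ * z₁ + w₂ * z₂) ^ q ≤ w₁ * z₁ ^ q + w₂ * z₂ ^ q := by
  have := NNReal.rpow_arith_mean_le_arith_mean2_rpow ⟨w₁, hw₁⟩ ⟨w₂, hw₂⟩ ⟨z₁, hz₁⟩ ⟨z₂, hz₂⟩
    (by ext; exact hw) hq
  exact_mod_cast this

private lemma key_t {p : ℝ} (hp : 2 < p) {t : ℝ} (ht0 : 0 ≤ t) (ht1 : t ≤ 1) :
    2 + 2 ^ (p - 1) * t ^ p ≤ (1 + t) ^ p + (1 - t) ^ p := by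
  have hp1 : (1 : ℝ) ≤ p := by linarith
  have hp1' : (1 : ℝ) ≤ p - 1 := by linarith
  set F : ℝ → ℝ := fun s => (1 + s) ^ p + (1 - s) ^ p - 2 ^ (p - 1) * s ^ p with hF
  set F' : ℝ → ℝ := fun s =>
    p * (1 + s) ^ (p - 1) * 1 + p * (1 - s) ^ (p - 1) * (-1) - 2 ^ (p - 1) * (p * s ^ (p - 1))
    with hF'
  have hderiv : ∀ x : ℝ, HasDerivAt F (F' x) x := by
    intro x
    have h1 : HasDerivAt (fun s : ℝ => (1 + s) ^ p) (p * (1 + x) ^ (p - 1) * 1) x :=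
      (Real.hasDerivAt_rpow_const (Or.inr hp1)).comp x ((hasDerivAt_id x).const_add 1)
    have h2 : HasDerivAt (fun s : ℝ => (1 - s) ^ p) (p * (1 - x) ^ (p - 1) * (-1)) x :=
      (Real.hasDerivAt_rpow_const (Or.inr hp1)).comp x ((hasDerivAt_id x).const_sub 1)
    have h3 : HasDerivAt (fun s : ℝ => 2 ^ (p - 1) * s ^ p)
        (2 ^ (p - 1) * (p * x ^ (p - 1))) x :=
      (Real.hasDerivAt_rpow_const (Or.inr hp1)).const_mul _
    exact (h1.add h2).sub h3
  have hmono : MonotoneOn F (Set.Icc 0 1) := by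
    apply monotoneOn_of_hasDerivWithinAt_nonneg (convex_Icc 0 1)
      (fun x _ => (hderiv x).continuousAt.continuousWithinAt)
      (fun x _ => (hderiv x).hasDerivWithinAt)
    intro x hx
    rw [interior_Icc] at hx
    obtain ⟨hx0, hx1⟩ := hx
    have hsup : (2 * x) ^ (p - 1) + (1 - x) ^ (p - 1) ≤ (1 + x) ^ (p - 1) := by
      have := rsuper hp1' (by linarith : (0:ℝ) ≤ 2 * x) (by linarith : (0:ℝ) ≤ 1 - x)
      calc (2 * x) ^ (p - 1) + (1 - x) ^ (p - 1) ≤ (2 * x + (1 - x)) ^ (p - 1) := this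
        _ = (1 + x) ^ (p - 1) := by ring_nf
    have h2x : (2 * x) ^ (p - 1) = 2 ^ (p - 1) * x ^ (p - 1) :=
      Real.mul_rpow (by norm_num) hx0.le
    rw [h2x] at hsup
    have hppos : (0 : ℝ) < p := by linarith
    simp only [hF']
    nlinarith [hsup, hppos]
  have h0 : F 0 = 2 := by
    simp [hF, Real.zero_rpow (by positivity : p ≠ 0)]
    norm_num
  have := hmono (Set.mem_Icc.mpr ⟨le_refl 0, zero_le_one⟩) (Set.mem_Icc.mpr ⟨ht0, ht1⟩) ht0
  rw [h0] at this
  simp only [hF] at this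
  linarith

private lemma lemA {p : ℝ} (hp : 2 < p) {u : ℝ} (hu : 0 ≤ u) :
    (1 + u) ^ p + 2 ^ (p - 2) * |1 - u| ^ p ≤ 2 ^ (p - 1) * (1 + u ^ p) := by
  have h1u : (0:ℝ) < 1 + u := by linarith
  set t : ℝ := |1 - u| / (1 + u) with htdef
  have ht0 : 0 ≤ t := by positivity
  have ht1 : t ≤ 1 := by
    rw [htdef, div_le_one h1u]
    rcases abs_cases (1 - u) with ⟨h, _⟩ | ⟨h, _⟩ <;> linarith
  have hkey := key_t hp ht0 ht1
  have hmul := mul_le_mul_of_nonneg_left hkey (le_of_lt (Real.rpow_pos_of_pos h1u p))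
  have e1 : (1 + u) ^ p * (1 + t) ^ p = (1 + u + |1 - u|) ^ p := by
    rw [← Real.mul_rpow h1u.le (by linarith : (0:ℝ) ≤ 1 + t)]
    congr 1
    rw [htdef]; field_simp
  have e2 : (1 + u) ^ p * (1 - t) ^ p = (1 + u - |1 - u|) ^ p := by
    rw [← Real.mul_rpow h1u.le (by linarith : (0:ℝ) ≤ 1 - t)]
    congr 1
    rw [htdef]; field_simp
  have e3 : (1 + u) ^ p * (2 ^ (p - 1) * t ^ p) = 2 ^ (p - 1) * |1 - u| ^ p := by
    have : (1 + u) ^ p * t ^ p = |1 - u| ^ p := by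
      rw [← Real.mul_rpow h1u.le ht0]
      congr 1
      rw [htdef]; field_simp
    rw [← this]; ring
  have e4 : (1 + u + |1 - u|) ^ p + (1 + u - |1 - u|) ^ p = 2 ^ p * (1 + u ^ p) := by
    rcases abs_cases (1 - u) with ⟨h, _⟩ | ⟨h, _⟩
    · rw [h, show (1 + u + (1 - u)) = (2:ℝ) by ring, show (1 + u - (1 - u)) = 2 * u by ring,
        Real.mul_rpow (by norm_num) hu]
      ring
    · rw [h, show (1 + u + -(1 - u)) = 2 * u by ring, show (1 + u - -(1 - u)) = (2:ℝ) by ring,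
        Real.mul_rpow (by norm_num) hu]
      ring
  rw [mul_add, mul_add, e1, e2, e3, e4] at hmul
  have h2p : (2:ℝ) ^ p = 2 * 2 ^ (p - 1) := by
    rw [show p = 1 + (p - 1) by ring, Real.rpow_add (by norm_num : (0:ℝ) < 2), Real.rpow_one]
    ring_nf
  have h2p1 : (2:ℝ) ^ (p - 1) = 2 * 2 ^ (p - 2) := by
    rw [show p - 1 = 1 + (p - 2) by ring, Real.rpow_add (by norm_num : (0:ℝ) < 2), Real.rpow_one]
  rw [h2p, h2p1] at hmul
  rw [h2p1]
  nlinarith [hmul, Real.rpow_nonneg (abs_nonneg (1 - u)) p]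

private lemma lemB {p : ℝ} (hp : 2 < p) (x : ℝ) :
    (2 ^ (p - 2) - 1) * abs (1 - |x|) ^ p ≤
      2 ^ (p - 1) * (1 + |x| ^ p) - (|1 + x| ^ p + |1 - x| ^ p) := by
  rcases le_or_gt 0 x with hx | hx
  · rw [abs_of_nonneg hx, abs_of_nonneg (by linarith : (0:ℝ) ≤ 1 + x)]
    have := lemA hp hx
    linarith
  · have hax : |x| = -x := abs_of_neg hx
    have e2 : |1 + x| = abs (1 - |x|) := by rw [hax]; congr 1; ring
    have e3 : |1 - x| = 1 + |x| := by
      rw [abs_of_pos (by linarith : (0:ℝ) < 1 - x), hax]; ring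
    rw [e2, e3]
    have := lemA hp (abs_nonneg x)
    linarith

private lemma heq_abs {x y : ℝ} (hxy : 0 ≤ x * y) : |x - y| = abs (|x| - |y|) := by
  rcases le_or_gt 0 x with hx | hx <;> rcases le_or_gt 0 y with hy | hy
  · rw [abs_of_nonneg hx, abs_of_nonneg hy]
  · have hx0 : x = 0 := by
      rcases eq_or_lt_of_le hx with h | h
      · exact h.symm
      · exfalso
        nlinarith [mul_pos h (neg_pos.mpr hy)]
    subst hx0; simp
  · have hy0 : y = 0 := by
      rcases eq_or_lt_of_le hy with h | h
      · exact h.symm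
      · exfalso
        nlinarith [mul_pos h (neg_pos.mpr hx)]
    subst hy0; simp
  · rw [abs_of_neg hx, abs_of_neg hy, show -x - -y = -(x - y) by ring, abs_neg]

theorem stmt14 (p : ℝ) (hp : 2 < p) (ε : ℝ) (hε : 0 < ε) :
    ∃ C : ℝ, 0 < C ∧ ∀ x y : ℝ,
      ((|x| ∈ Set.Ioo (1 - ε) (1 + ε) ∧ |y| ∈ Set.Ioo (1 - ε) (1 + ε) ∧ x * y < 0) →
        (|x - y| ^ p + C * (|1 + x| ^ p + |1 - x| ^ p + |1 + y| ^ p + |1 - y| ^ p)) /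
            (2 + |x| ^ p + |y| ^ p) ≤
          C * 2 ^ (p - 1) + (1 + ε) * 2 ^ p / (2 + |x| ^ p + |y| ^ p)) ∧
      (¬(|x| ∈ Set.Ioo (1 - ε) (1 + ε) ∧ |y| ∈ Set.Ioo (1 - ε) (1 + ε) ∧ x * y < 0) →
        (|x - y| ^ p + C * (|1 + x| ^ p + |1 - x| ^ p + |1 + y| ^ p + |1 - y| ^ p)) /
            (2 + |x| ^ p + |y| ^ p) ≤ C * 2 ^ (p - 1)) := by
  have hp1 : (1:ℝ) ≤ p := by linarith
  have hp0 : (0:ℝ) < p := by linarith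
  have hp1' : (1:ℝ) ≤ p - 1 := by linarith
  obtain ⟨κ, hκdef⟩ : ∃ κ : ℝ, κ = 2 ^ (p - 2) - 1 := ⟨_, rfl⟩
  have hκ : 0 < κ := by
    have h2 : (2:ℝ) ^ (0:ℝ) < 2 ^ (p - 2) :=
      Real.rpow_lt_rpow_left_iff (by norm_num : (1:ℝ) < 2) |>.mpr (by linarith)
    rw [Real.rpow_zero] at h2
    rw [hκdef]; linarith
  obtain ⟨θ, hθdef⟩ : ∃ θ : ℝ, θ = ε / ((p - 1) * (1 + ε)) := ⟨_, rfl⟩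
  have hθ0 : 0 < θ := by rw [hθdef]; positivity
  have hθ1 : θ < 1 := by
    rw [hθdef, div_lt_one (by positivity)]
    nlinarith
  have h1θ : 0 < 1 - θ := by linarith
  have hW : 1 / (1 + ε) ≤ (1 - θ) ^ (p - 1) := by
    have hb := one_add_mul_self_le_rpow_one_add (s := -θ) (by linarith) hp1'
    have hpne : p - 1 ≠ 0 := by positivity
    have hεne : (1:ℝ) + ε ≠ 0 := by positivity
    have hpq : (p - 1) * θ = ε / (1 + ε) := by
      rw [hθdef]
      field_simp
    have e : 1 + (p - 1) * (-θ) = 1 / (1 + ε) := by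
      rw [mul_neg, hpq]
      field_simp
      ring
    rw [e] at hb
    calc 1 / (1 + ε) ≤ (1 + -θ) ^ (p - 1) := hb
      _ = (1 - θ) ^ (p - 1) := by rw [← sub_eq_add_neg]
  have hθp : 0 < θ ^ (p - 1) := Real.rpow_pos_of_pos hθ0 _
  obtain ⟨T, hTdef⟩ : ∃ T : ℝ, T = 2 ^ (p - 1) + 2 ^ (p - 1) * 2 ^ (p - 1)
      + 2 ^ (p - 1) * 2 ^ p / ε ^ p + 2 ^ (p - 1) / θ ^ (p - 1) := ⟨_, rfl⟩
  have hT1 : (0:ℝ) < 2 ^ (p - 1) := by positivity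
  have hT2 : (0:ℝ) < 2 ^ (p - 1) * 2 ^ (p - 1) := by positivity
  have hT3 : (0:ℝ) < 2 ^ (p - 1) * 2 ^ p / ε ^ p := by
    have : (0:ℝ) < ε ^ p := Real.rpow_pos_of_pos hε p
    positivity
  have hT4 : (0:ℝ) < 2 ^ (p - 1) / θ ^ (p - 1) := by positivity
  have hT0 : 0 < T := by rw [hTdef]; linarith
  refine ⟨T / κ + 1, by positivity, fun x y => ?_⟩
  obtain ⟨C, hCdef⟩ : ∃ C : ℝ, C = T / κ + 1 := ⟨_, rfl⟩
  rw [show T / κ + 1 = C from hCdef.symm]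
  have hC : 0 < C := by
    rw [hCdef]
    exact add_pos (div_pos hT0 hκ) one_pos
  have hCκ : C * κ = T + κ := by
    rw [hCdef]
    field_simp
  obtain ⟨a, hadef⟩ : ∃ a : ℝ, a = abs (1 - |x|) := ⟨_, rfl⟩
  obtain ⟨b, hbdef⟩ : ∃ b : ℝ, b = abs (1 - |y|) := ⟨_, rfl⟩
  have ha0 : 0 ≤ a := hadef ▸ abs_nonneg _
  have hb0 : 0 ≤ b := hbdef ▸ abs_nonneg _
  have hap : 0 ≤ a ^ p := Real.rpow_nonneg ha0 _
  have hbp : 0 ≤ b ^ p := Real.rpow_nonneg hb0 _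
  obtain ⟨Dx, hDx⟩ : ∃ D : ℝ,
    D = 2 ^ (p - 1) * (1 + |x| ^ p) - (|1 + x| ^ p + |1 - x| ^ p) := ⟨_, rfl⟩
  obtain ⟨Dy, hDy⟩ : ∃ D : ℝ,
    D = 2 ^ (p - 1) * (1 + |y| ^ p) - (|1 + y| ^ p + |1 - y| ^ p) := ⟨_, rfl⟩
  have hΔx : κ * a ^ p ≤ Dx := by
    rw [hκdef, hadef, hDx]; exact lemB hp x
  have hΔy : κ * b ^ p ≤ Dy := by
    rw [hκdef, hbdef, hDy]; exact lemB hp y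
  have hab : κ * (a ^ p + b ^ p) ≤ Dx + Dy := by nlinarith
  have hDsum : 0 ≤ Dx + Dy := le_trans (by positivity) hab
  have hDpos : (0:ℝ) < 2 + |x| ^ p + |y| ^ p := by
    have h1 : 0 ≤ |x| ^ p := Real.rpow_nonneg (abs_nonneg x) _
    have h2 : 0 ≤ |y| ^ p := Real.rpow_nonneg (abs_nonneg y) _
    linarith
  have hmain : ∀ R : ℝ, 0 ≤ R →
      |x - y| ^ p ≤ C * (Dx + Dy) + R →
      (|x - y| ^ p + C * (|1 + x| ^ p + |1 - x| ^ p + |1 + y| ^ p + |1 - y| ^ p)) /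
          (2 + |x| ^ p + |y| ^ p) ≤ C * 2 ^ (p - 1) + R / (2 + |x| ^ p + |y| ^ p) := by
    intro R hR h
    have hid : C * (Dx + Dy) + C * (|1 + x| ^ p + |1 - x| ^ p + |1 + y| ^ p + |1 - y| ^ p)
        = C * 2 ^ (p - 1) * (2 + |x| ^ p + |y| ^ p) := by
      rw [hDx, hDy]; ring
    have hS : |x - y| ^ p + C * (|1 + x| ^ p + |1 - x| ^ p + |1 + y| ^ p + |1 - y| ^ p)
        ≤ C * 2 ^ (p - 1) * (2 + |x| ^ p + |y| ^ p) + R := by linarith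
    calc (|x - y| ^ p + C * (|1 + x| ^ p + |1 - x| ^ p + |1 + y| ^ p + |1 - y| ^ p)) /
          (2 + |x| ^ p + |y| ^ p)
        ≤ (C * 2 ^ (p - 1) * (2 + |x| ^ p + |y| ^ p) + R) / (2 + |x| ^ p + |y| ^ p) := by
          exact (div_le_div_iff_of_pos_right hDpos).mpr hS
      _ = C * 2 ^ (p - 1) + R / (2 + |x| ^ p + |y| ^ p) := by
          rw [add_div, mul_div_assoc, div_self hDpos.ne', mul_one]
  have hfin : ∀ K R : ℝ, 0 ≤ K → K ≤ C * κ →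
      |x - y| ^ p ≤ K * (a ^ p + b ^ p) + R → |x - y| ^ p ≤ C * (Dx + Dy) + R := by
    intro K R hK hKC h
    have h1 : K * (a ^ p + b ^ p) ≤ C * κ * (a ^ p + b ^ p) :=
      mul_le_mul_of_nonneg_right hKC (by positivity)
    have h2 : C * κ * (a ^ p + b ^ p) = C * (κ * (a ^ p + b ^ p)) := by ring
    have h3 : C * (κ * (a ^ p + b ^ p)) ≤ C * (Dx + Dy) :=
      mul_le_mul_of_nonneg_left hab hC.le
    linarith
  have habs2 : |x - y| ≤ 2 + (a + b) := by
    have t1 : |x - y| ≤ |x| + |y| := by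
      calc |x - y| = |x + -y| := by rw [sub_eq_add_neg]
        _ ≤ |x| + |-y| := abs_add_le _ _
        _ = |x| + |y| := by rw [abs_neg]
    have t2 : |x| - 1 ≤ a := by
      rw [hadef, abs_sub_comm]
      exact le_abs_self _
    have t3 : |y| - 1 ≤ b := by
      rw [hbdef, abs_sub_comm]
      exact le_abs_self _
    linarith
  have hxy0 : 0 ≤ |x - y| := abs_nonneg _
  constructor
  · -- good case
    intro _
    apply hmain ((1 + ε) * 2 ^ p) (by positivity)
    apply hfin (2 ^ (p - 1) / θ ^ (p - 1)) _ hT4.le (by rw [hCκ, hTdef]; linarith)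
    have hw := rwt hp1 (by linarith : (0:ℝ) ≤ 1 - θ) hθ0.le (by ring)
      (by positivity : (0:ℝ) ≤ 2 / (1 - θ)) (by positivity : (0:ℝ) ≤ (a + b) / θ)
    have harg : (1 - θ) * (2 / (1 - θ)) + θ * ((a + b) / θ) = 2 + (a + b) := by
      field_simp
    rw [harg] at hw
    have e5 : (1 - θ) * (2 / (1 - θ)) ^ p = 2 ^ p / (1 - θ) ^ (p - 1) := by
      have hne : ((1 - θ):ℝ) ^ p ≠ 0 := (Real.rpow_pos_of_pos h1θ p).ne'
      have hne2 : ((1 - θ):ℝ) ^ (p - 1) ≠ 0 := (Real.rpow_pos_of_pos h1θ _).ne'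
      rw [Real.div_rpow (by norm_num) h1θ.le, Real.rpow_sub h1θ, Real.rpow_one]
      field_simp
    have e6 : θ * ((a + b) / θ) ^ p = (a + b) ^ p / θ ^ (p - 1) := by
      have hne : (θ:ℝ) ^ p ≠ 0 := (Real.rpow_pos_of_pos hθ0 p).ne'
      have hne2 : (θ:ℝ) ^ (p - 1) ≠ 0 := (Real.rpow_pos_of_pos hθ0 _).ne'
      rw [Real.div_rpow (by positivity) hθ0.le, Real.rpow_sub hθ0, Real.rpow_one]
      field_simp
    rw [e5, e6] at hw
    have hb1 : 2 ^ p / (1 - θ) ^ (p - 1) ≤ (1 + ε) * 2 ^ p := by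
      rw [div_le_iff₀ (by positivity : (0:ℝ) < (1 - θ) ^ (p - 1))]
      have hm := mul_le_mul_of_nonneg_left hW (by positivity : (0:ℝ) ≤ (1 + ε) * 2 ^ p)
      calc (2:ℝ) ^ p = (1 + ε) * 2 ^ p * (1 / (1 + ε)) := by field_simp
        _ ≤ (1 + ε) * 2 ^ p * (1 - θ) ^ (p - 1) := hm
    have hb2 : (a + b) ^ p / θ ^ (p - 1) ≤ 2 ^ (p - 1) * (a ^ p + b ^ p) / θ ^ (p - 1) := by
      gcongr
      exact rclark hp1 ha0 hb0
    have hb2' : 2 ^ (p - 1) * (a ^ p + b ^ p) / θ ^ (p - 1)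
        = 2 ^ (p - 1) / θ ^ (p - 1) * (a ^ p + b ^ p) := by ring
    have hpow : |x - y| ^ p ≤ (2 + (a + b)) ^ p :=
      Real.rpow_le_rpow hxy0 habs2 hp0.le
    linarith
  · -- not good case
    intro hng
    have h0 := hmain 0 le_rfl
    refine le_trans (h0 ?_) (by simp)
    by_cases hxy : x * y < 0
    · -- outside the interval
      have hout : ε ≤ a ∨ ε ≤ b := by
        by_contra hcon
        push_neg at hcon
        obtain ⟨hca, hcb⟩ := hcon
        rw [hadef] at hca
        rw [hbdef] at hcb
        apply hng
        refine ⟨?_, ?_, hxy⟩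
        · rw [Set.mem_Ioo]
          constructor
          · linarith [le_abs_self (1 - |x|)]
          · linarith [neg_abs_le (1 - |x|)]
        · rw [Set.mem_Ioo]
          constructor
          · linarith [le_abs_self (1 - |y|)]
          · linarith [neg_abs_le (1 - |y|)]
      have hεab : ε ^ p ≤ a ^ p + b ^ p := by
        rcases hout with h | h
        · have := Real.rpow_le_rpow hε.le h hp0.le
          linarith
        · have := Real.rpow_le_rpow hε.le h hp0.le
          linarith
      apply hfin (2 ^ (p - 1) * 2 ^ p / ε ^ p + 2 ^ (p - 1) * 2 ^ (p - 1)) 0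
        (by linarith) (by rw [hCκ, hTdef]; linarith)
      have hpow : |x - y| ^ p ≤ (2 + (a + b)) ^ p :=
        Real.rpow_le_rpow hxy0 habs2 hp0.le
      have hcl1 : (2 + (a + b)) ^ p ≤ 2 ^ (p - 1) * (2 ^ p + (a + b) ^ p) :=
        rclark hp1 (by norm_num) (by positivity)
      have hcl2 : (a + b) ^ p ≤ 2 ^ (p - 1) * (a ^ p + b ^ p) := rclark hp1 ha0 hb0
      have habs3 : 2 ^ (p - 1) * 2 ^ p ≤ 2 ^ (p - 1) * 2 ^ p / ε ^ p * (a ^ p + b ^ p) := by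
        have hεp : (0:ℝ) < ε ^ p := Real.rpow_pos_of_pos hε p
        have hT3' : (0:ℝ) < 2 ^ (p - 1) * 2 ^ p := by positivity
        rw [div_mul_eq_mul_div, le_div_iff₀ hεp]
        have hm := mul_le_mul_of_nonneg_left hεab (le_of_lt hT3')
        linarith [hm]
      have hcl2' := mul_le_mul_of_nonneg_left hcl2 hT1.le
      linarith [hpow, hcl1, hcl2', habs3]
    · -- same signs
      apply hfin (2 ^ (p - 1)) 0 hT1.le (by rw [hCκ, hTdef]; linarith)
      have heq : |x - y| = abs (|x| - |y|) := heq_abs (le_of_not_gt hxy)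
      have htri : abs (|x| - |y|) ≤ a + b := by
        calc abs (|x| - |y|) ≤ abs (|x| - 1) + abs (1 - |y|) := abs_sub_le _ _ _
          _ = a + b := by rw [hadef, hbdef, abs_sub_comm]
      have hpow : |x - y| ^ p ≤ (a + b) ^ p := by
        rw [heq]
        exact Real.rpow_le_rpow (abs_nonneg _) htri hp0.le
      have hcl : (a + b) ^ p ≤ 2 ^ (p - 1) * (a ^ p + b ^ p) := rclark hp1 ha0 hb0
      linarith
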